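/- Let d be a metric on ℕ, b₀ ∈ ℕ, and let M ∈ B(d,b₀) induce a bounded operator on ℓ² which is elliptic with constant C_ell > 0 (so that M is invertible with bounded inverse M⁻¹ on ℓ², and every finite section M[k] is invertible). Fix a block structure on ℕ. Then for every ε > 0 there exists a bandwidth b ∈ ℕ, depending only on b₀, C_ell, ‖M‖₂ and ε, together with matrices R ∈ B(d,b) and, for each k ∈ ℕ, R_k ∈ B(d,b) (identifying M[k]⁻¹ with its extension by zero to ℕ × ℕ) such that ‖M⁻¹ − R‖₂ + sup_{k∈ℕ} ‖M[k]⁻¹ − R_k‖₂ ≤ ε. If, in addition, M is block-banded with bandwidth b₀, then R and all R_k can be chosen block-banded with bandwidth b; if M is block-diagonal, then R and all R_k can be chosen block-diagonal. -/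

import Mathlib

abbrev Mat := ℕ → ℕ → ℝ

noncomputable def mulVec (M : Mat) (x : ℕ → ℝ) : ℕ → ℝ := fun i => ∑' j, M i j * x j

def Memℓ2 (x : ℕ → ℝ) : Prop := Summable fun i => x i ^ 2

noncomputable def l2norm (x : ℕ → ℝ) : ℝ := Real.sqrt (∑' i, x i ^ 2)

def BoundedWith (M : Mat) (K : ℝ) : Prop :=
  ∀ x : ℕ → ℝ, Memℓ2 x →
    (∀ i, Summable fun j => |M i j * x j|) ∧ Memℓ2 (mulVec M x) ∧
      l2norm (mulVec M x) ≤ K * l2norm x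

def IsBoundedOp (M : Mat) : Prop := ∃ K : ℝ, 0 ≤ K ∧ BoundedWith M K

def Elliptic (M : Mat) (c : ℝ) : Prop :=
  ∀ x : ℕ → ℝ, Memℓ2 x → c * (∑' i, x i ^ 2) ≤ ∑' i, mulVec M x i * x i

def IsMetric (d : ℕ → ℕ → ℝ) : Prop :=
  (∀ i j, 0 ≤ d i j) ∧ (∀ i j, d i j = 0 ↔ i = j) ∧ (∀ i j, d i j = d j i) ∧
    ∀ i j k, d i k ≤ d i j + d j k

def Banded (d : ℕ → ℕ → ℝ) (b : ℝ) (M : Mat) : Prop := ∀ i j, b < d i j → M i j = 0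

/-- A block structure `0 = n₀ < n₁ < n₂ < ⋯`; block `i` consists of the indices
`n i ≤ p < n (i+1)`. -/
def IsBlockStructure (n : ℕ → ℕ) : Prop := StrictMono n ∧ n 0 = 0

def InBlock (n : ℕ → ℕ) (i p : ℕ) : Prop := n i ≤ p ∧ p < n (i + 1)

def BlockBanded (n : ℕ → ℕ) (b : ℕ) (M : Mat) : Prop :=
  ∀ i j p q, InBlock n i p → InBlock n j q → (b : ℤ) < |(i : ℤ) - (j : ℤ)| → M p q = 0

def BlockDiag (n : ℕ → ℕ) (M : Mat) : Prop :=
  ∀ i j p q, InBlock n i p → InBlock n j q → i ≠ j → M p q = 0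

def matSub (A B : Mat) : Mat := fun p q => A p q - B p q

/-- `N` is a two-sided inverse of `M` as an operator on ℓ². -/
def IsInverseOn (M N : Mat) : Prop :=
  ∀ x : ℕ → ℝ, Memℓ2 x →
    Memℓ2 (mulVec M x) ∧ Memℓ2 (mulVec N x) ∧
      mulVec N (mulVec M x) = x ∧ mulVec M (mulVec N x) = x

def sect (M : Mat) (N : ℕ) : Matrix (Fin N) (Fin N) ℝ := Matrix.of fun i j => M i j

/-- Extension of a finite matrix by zero to an infinite matrix. -/
def extendZero (N : ℕ) (A : Matrix (Fin N) (Fin N) ℝ) : Mat :=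
  fun p q => if h : p < N ∧ q < N then A ⟨p, h.1⟩ ⟨q, h.2⟩ else 0

set_option maxHeartbeats 1000000
set_option synthInstance.maxHeartbeats 1000000

noncomputable section
open ENNReal
namespace BAI

abbrev H2 := lp (fun _ : ℕ => ℝ) 2

lemma norm_rpow_eq_sq (a : ℝ) : ‖a‖ ^ (2:ℝ≥0∞).toReal = a ^ 2 := by
  rw [show ((2:ℝ≥0∞).toReal) = ((2:ℕ):ℝ) by norm_num, Real.rpow_natCast]
  simp [sq_abs]

lemma memℓ2_iff {x : ℕ → ℝ} : Memℓ2 x ↔ Memℓp x 2 := by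
  rw [memℓp_gen_iff (by norm_num : (0:ℝ) < (2:ℝ≥0∞).toReal)]
  exact summable_congr fun i => (norm_rpow_eq_sq (x i)).symm

def toLp (x : ℕ → ℝ) (hx : Memℓ2 x) : H2 := ⟨x, memℓ2_iff.1 hx⟩

@[simp] lemma coe_toLp (x : ℕ → ℝ) (hx : Memℓ2 x) : ⇑(toLp x hx) = x := rfl

lemma memℓ2_coe (f : H2) : Memℓ2 ⇑f := memℓ2_iff.2 f.2

lemma tsum_sq_eq (f : H2) : ∑' i, (f i : ℝ) ^ 2 = ‖f‖ ^ 2 := by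
  have h := lp.norm_rpow_eq_tsum (by norm_num : (0:ℝ) < (2:ℝ≥0∞).toReal) f
  simp only [norm_rpow_eq_sq] at h
  rw [← h, show ((2:ℝ≥0∞).toReal) = ((2:ℕ):ℝ) by norm_num, Real.rpow_natCast]

lemma l2norm_coe (f : H2) : l2norm ⇑f = ‖f‖ := by
  rw [l2norm, tsum_sq_eq, Real.sqrt_sq (norm_nonneg f)]

abbrev e (j : ℕ) : H2 := lp.single 2 j (1:ℝ)

lemma inner_coord (f g : H2) : (inner ℝ f g : ℝ) = ∑' i, (f i) * (g i) := by
  rw [lp.inner_eq_tsum]; exact tsum_congr fun i => by simp [RCLike.inner_apply, mul_comm]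

lemma coord_eq_inner (f : H2) (i : ℕ) : (f i : ℝ) = inner ℝ (e i) f := by
  rw [lp.inner_single_left]; simp [RCLike.inner_apply]


/-- The matrix of a continuous linear operator on ℓ². -/
def matOf (T : H2 →L[ℝ] H2) : Mat := fun i j => T (e j) i

open ContinuousLinearMap in
lemma matOf_eq_adjoint_row (T : H2 →L[ℝ] H2) (i j : ℕ) :
    matOf T i j = (adjoint T (e i) : H2) j := by
  rw [matOf, coord_eq_inner (T (e j)) i, ← ContinuousLinearMap.adjoint_inner_left,
    coord_eq_inner (adjoint T (e i)) j, real_inner_comm]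

/-- absolute value of an ℓ² element -/
def absLp (f : H2) : H2 := ⟨fun i => |f i|, by
  refine memℓ2_iff.1 ?_
  have := memℓ2_coe f
  unfold Memℓ2 at this ⊢
  simpa [sq_abs] using this⟩

@[simp] lemma absLp_apply (f : H2) (i : ℕ) : (absLp f i : ℝ) = |f i| := rfl

lemma summable_abs_mul (f g : H2) : Summable fun j => |(f j : ℝ) * g j| := by
  have := lp.summable_inner (𝕜 := ℝ) (absLp f) (absLp g)
  simp only [RCLike.inner_apply, starRingEnd_apply, star_trivial, absLp_apply] at this
  simpa [abs_mul, mul_comm] using this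

lemma summable_mul (f g : H2) : Summable fun j => (f j : ℝ) * g j :=
  (summable_abs_mul f g).of_abs

open ContinuousLinearMap in
lemma summable_matOf_row (T : H2 →L[ℝ] H2) (f : H2) (i : ℕ) :
    Summable fun j => |matOf T i j * f j| := by
  simp only [matOf_eq_adjoint_row]
  exact summable_abs_mul (adjoint T (e i)) f

open ContinuousLinearMap in
lemma mulVec_matOf (T : H2 →L[ℝ] H2) (f : H2) : mulVec (matOf T) ⇑f = ⇑(T f) := by
  funext i
  rw [mulVec]
  simp only [matOf_eq_adjoint_row]
  rw [← inner_coord (adjoint T (e i)) f, ContinuousLinearMap.adjoint_inner_left,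
    ← coord_eq_inner]

lemma boundedWith_matOf (T : H2 →L[ℝ] H2) {K : ℝ} (hK : ‖T‖ ≤ K) :
    BoundedWith (matOf T) K := by
  intro x hx
  have hxf : x = ⇑(toLp x hx) := rfl
  rw [hxf, mulVec_matOf]
  refine ⟨fun i => by simpa using summable_matOf_row T (toLp x hx) i,
    memℓ2_coe _, ?_⟩
  rw [l2norm_coe, l2norm_coe]
  calc ‖T (toLp x hx)‖ ≤ ‖T‖ * ‖toLp x hx‖ := T.le_opNorm _
    _ ≤ K * ‖toLp x hx‖ := by
        exact mul_le_mul_of_nonneg_right hK (norm_nonneg _)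

lemma matOf_sub (T S : H2 →L[ℝ] H2) (i j : ℕ) :
    matOf (T - S) i j = matOf T i j - matOf S i j := by
  simp [matOf]

lemma matOf_mul_entry (T S : H2 →L[ℝ] H2) (i j : ℕ) :
    matOf (T * S) i j = ∑' k, matOf T i k * matOf S k j := by
  have : matOf (T * S) i j = (T (S (e j))) i := rfl
  rw [this, ← mulVec_matOf T (S (e j))]; rfl

lemma matOf_one (i j : ℕ) : matOf 1 i j = if i = j then 1 else 0 := by
  simp only [matOf, ContinuousLinearMap.one_apply]
  rcases eq_or_ne i j with h | h
  · subst h; simp [lp.single_apply_self]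
  · rw [if_neg h]
    exact lp.single_apply_ne 2 j _ (h)

lemma matOf_smul (c : ℝ) (T : H2 →L[ℝ] H2) (i j : ℕ) :
    matOf (c • T) i j = c * matOf T i j := rfl

lemma matOf_sum {s : Finset ℕ} (T : ℕ → (H2 →L[ℝ] H2)) (i j : ℕ) :
    matOf (∑ n ∈ s, T n) i j = ∑ n ∈ s, matOf (T n) i j := by
  simp only [matOf, ContinuousLinearMap.sum_apply]
  induction s using Finset.induction with
  | empty => simp
  | insert hns ih => simp_all [lp.coeFn_add]


section Neumann

variable {E : Type*} [NormedAddCommGroup E] [InnerProductSpace ℝ E] [CompleteSpace E]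

lemma neumann (T : E →L[ℝ] E) (c : ℝ) (hc : 0 < c) (hcT : c ≤ ‖T‖)
    (hell : ∀ x : E, c * ‖x‖ ^ 2 ≤ inner ℝ (T x) x) :
    IsUnit T ∧ ∀ N : ℕ,
      ‖Ring.inverse T - (c / ‖T‖ ^ 2) •
          ∑ n ∈ Finset.range N, (1 - (c / ‖T‖ ^ 2) • T) ^ n‖
        ≤ (1 / c) * Real.sqrt (1 - c ^ 2 / ‖T‖ ^ 2) ^ N /
            (1 - Real.sqrt (1 - c ^ 2 / ‖T‖ ^ 2)) := by
  set K : ℝ := ‖T‖ with hKdef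
  have hK : 0 < K := lt_of_lt_of_le hc hcT
  set t : ℝ := c / K ^ 2 with htdef
  have ht : 0 < t := by positivity
  set U : E →L[ℝ] E := 1 - t • T with hUdef
  set q : ℝ := Real.sqrt (1 - c ^ 2 / K ^ 2) with hqdef
  have hcK2 : c ^ 2 ≤ K ^ 2 := by
    apply pow_le_pow_left₀ hc.le hcT
  have harg0 : 0 ≤ 1 - c ^ 2 / K ^ 2 := by
    have : c ^ 2 / K ^ 2 ≤ 1 := (div_le_one (by positivity)).2 hcK2
    linarith
  have hq0 : 0 ≤ q := Real.sqrt_nonneg _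
  have hq1 : q < 1 := by
    have h1 : 1 - c ^ 2 / K ^ 2 < 1 := by
      have : 0 < c ^ 2 / K ^ 2 := by positivity
      linarith
    calc q < Real.sqrt 1 := Real.sqrt_lt_sqrt harg0 h1
      _ = 1 := Real.sqrt_one
  have hqsq : q ^ 2 = 1 - c ^ 2 / K ^ 2 := Real.sq_sqrt harg0
  -- the contraction estimate
  have hUx : ∀ x : E, ‖U x‖ ≤ q * ‖x‖ := by
    intro x
    have hexp : ‖U x‖ ^ 2 = ‖x‖ ^ 2 - 2 * (t * inner ℝ (T x) x) + t ^ 2 * ‖T x‖ ^ 2 := by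
      have : U x = x - t • T x := by simp [hUdef]
      rw [this, norm_sub_sq_real, real_inner_smul_right, norm_smul]
      rw [real_inner_comm]
      simp [abs_of_pos ht, mul_pow]
    have hTx : ‖T x‖ ≤ K * ‖x‖ := T.le_opNorm x
    have hTx2 : ‖T x‖ ^ 2 ≤ K ^ 2 * ‖x‖ ^ 2 := by
      calc ‖T x‖ ^ 2 ≤ (K * ‖x‖) ^ 2 := by
            apply pow_le_pow_left₀ (norm_nonneg _) hTx
        _ = K ^ 2 * ‖x‖ ^ 2 := by ring
    have hbound : ‖U x‖ ^ 2 ≤ (1 - 2 * t * c + t ^ 2 * K ^ 2) * ‖x‖ ^ 2 := by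
      rw [hexp]
      have h1 : t * (c * ‖x‖ ^ 2) ≤ t * inner ℝ (T x) x :=
        mul_le_mul_of_nonneg_left (hell x) ht.le
      nlinarith [sq_nonneg (‖T x‖), ht.le]
    have hcoef : 1 - 2 * t * c + t ^ 2 * K ^ 2 = q ^ 2 := by
      rw [hqsq, htdef]
      field_simp
      ring
    rw [hcoef] at hbound
    have := Real.sqrt_le_sqrt hbound
    rwa [Real.sqrt_sq (norm_nonneg _), show q ^ 2 * ‖x‖ ^ 2 = (q * ‖x‖) ^ 2 by ring,
      Real.sqrt_sq (by positivity)] at this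
  have hUnorm : ‖U‖ ≤ q := ContinuousLinearMap.opNorm_le_bound _ hq0 hUx
  have hUlt : ‖U‖ < 1 := lt_of_le_of_lt hUnorm hq1
  -- units
  have hv : ((1 : E →L[ℝ] E) - U) = t • T := by simp [hUdef]
  set v : (E →L[ℝ] E)ˣ := Units.oneSub U hUlt with hvdef
  have hvval : (↑v : E →L[ℝ] E) = t • T := hv
  have hvinv : (↑v⁻¹ : E →L[ℝ] E) = ∑' n : ℕ, U ^ n := rfl
  have hmul1 : T * (t • (↑v⁻¹ : E →L[ℝ] E)) = 1 := by
    calc T * (t • (↑v⁻¹ : E →L[ℝ] E)) = t • (T * ↑v⁻¹) := by rw [mul_smul_comm]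
      _ = (t • T) * ↑v⁻¹ := (smul_mul_assoc _ _ _).symm
      _ = ↑v * ↑v⁻¹ := by rw [hvval]
      _ = 1 := v.mul_inv
  have hmul2 : (t • (↑v⁻¹ : E →L[ℝ] E)) * T = 1 := by
    calc (t • (↑v⁻¹ : E →L[ℝ] E)) * T = t • (↑v⁻¹ * T) := by rw [smul_mul_assoc]
      _ = ↑v⁻¹ * (t • T) := by rw [mul_smul_comm]
      _ = ↑v⁻¹ * ↑v := by rw [hvval]
      _ = 1 := v.inv_mul
  set uT : (E →L[ℝ] E)ˣ := ⟨T, t • ↑v⁻¹, hmul1, hmul2⟩ with huT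
  have hTu : IsUnit T := ⟨uT, rfl⟩
  have hinvT : Ring.inverse T = t • (↑v⁻¹ : E →L[ℝ] E) := by
    have : Ring.inverse (↑uT : E →L[ℝ] E) = ↑uT⁻¹ := Ring.inverse_unit uT
    exact this
  refine ⟨hTu, fun N => ?_⟩
  have hsum : Summable fun n : ℕ => U ^ n := summable_geometric_of_norm_lt_one hUlt
  have hUpow : ∀ m : ℕ, ‖U ^ m‖ ≤ q ^ m := by
    intro m
    induction m with
    | zero => rw [pow_zero]; exact ContinuousLinearMap.norm_id_le
    | succ m ih =>
        calc ‖U ^ (m + 1)‖ = ‖U ^ m * U‖ := by rw [pow_succ]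
          _ ≤ ‖U ^ m‖ * ‖U‖ := norm_mul_le _ _
          _ ≤ q ^ m * q := by
              apply mul_le_mul ih hUnorm (norm_nonneg _) (by positivity)
          _ = q ^ (m + 1) := by rw [pow_succ]
  have hshift := Summable.sum_add_tsum_nat_add (f := fun n : ℕ => U ^ n) N hsum
  have hdiff : Ring.inverse T - t • ∑ n ∈ Finset.range N, U ^ n
      = t • ∑' n : ℕ, U ^ (n + N) := by
    rw [hinvT, hvinv, ← smul_sub]
    congr 1
    rw [← hshift]
    abel
  have hgeoq : Summable fun n : ℕ => q ^ (n + N) := by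
    simp_rw [pow_add]
    exact (summable_geometric_of_lt_one hq0 hq1).mul_right _
  have hsumnorm : Summable fun n : ℕ => ‖U ^ (n + N)‖ :=
    Summable.of_nonneg_of_le (fun n => norm_nonneg _) (fun n => hUpow _) hgeoq
  have hnorm1 : ‖∑' n : ℕ, U ^ (n + N)‖ ≤ q ^ N * (1 - q)⁻¹ := by
    calc ‖∑' n : ℕ, U ^ (n + N)‖ ≤ ∑' n : ℕ, ‖U ^ (n + N)‖ :=
          norm_tsum_le_tsum_norm hsumnorm
      _ ≤ ∑' n : ℕ, q ^ (n + N) := Summable.tsum_le_tsum (fun n => hUpow _) hsumnorm hgeoq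
      _ = q ^ N * (1 - q)⁻¹ := by
          simp_rw [pow_add]
          rw [tsum_mul_right, tsum_geometric_of_lt_one hq0 hq1, mul_comm]
  have htle : t ≤ 1 / c := by
    rw [htdef, div_le_div_iff₀ (by positivity) hc]
    nlinarith
  have hq1' : 0 < 1 - q := by linarith
  rw [hdiff]
  rw [norm_smul t (∑' n : ℕ, U ^ (n + N))]
  rw [Real.norm_eq_abs, abs_of_pos ht]
  calc t * ‖∑' n : ℕ, U ^ (n + N)‖ ≤ t * (q ^ N * (1 - q)⁻¹) :=
        mul_le_mul_of_nonneg_left hnorm1 ht.le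
    _ ≤ (1 / c) * (q ^ N * (1 - q)⁻¹) := by
        apply mul_le_mul_of_nonneg_right htle (by positivity)
    _ = (1 / c) * q ^ N / (1 - q) := by
        field_simp
  
end Neumann


section Finite

abbrev clmOf {N : ℕ} (C : Matrix (Fin N) (Fin N) ℝ) :
    EuclideanSpace ℝ (Fin N) →L[ℝ] EuclideanSpace ℝ (Fin N) :=
  Matrix.toEuclideanCLM (𝕜 := ℝ) C

variable {N : ℕ}

lemma clmOf_apply (C : Matrix (Fin N) (Fin N) ℝ) (x : EuclideanSpace ℝ (Fin N)) (i : Fin N) :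
    (clmOf C x) i = ∑ j, C i j * x j := rfl

/-- extend a finite vector by zero -/
def ext0 (N : ℕ) (y : EuclideanSpace ℝ (Fin N)) : ℕ → ℝ :=
  fun p => if h : p < N then y ⟨p, h⟩ else 0

/-- restrict an infinite vector -/
def extV (N : ℕ) (x : ℕ → ℝ) : EuclideanSpace ℝ (Fin N) :=
  (WithLp.equiv 2 _).symm (fun i : Fin N => x i)

@[simp] lemma extV_apply (x : ℕ → ℝ) (i : Fin N) : extV N x i = x i := rfl

lemma tsum_eq_fin_sum {h : ℕ → ℝ} (h0 : ∀ p, N ≤ p → h p = 0) :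
    ∑' p, h p = ∑ i : Fin N, h ↑i := by
  rw [tsum_eq_sum (s := Finset.range N) (fun p hp => h0 p (by simpa using hp)),
    Fin.sum_univ_eq_sum_range]

lemma memℓ2_ext0 (y : EuclideanSpace ℝ (Fin N)) : Memℓ2 (ext0 N y) := by
  apply summable_of_ne_finset_zero (s := Finset.range N)
  intro p hp
  have : N ≤ p := by simpa using hp
  simp [ext0, Nat.not_lt.2 this]

lemma ext0_eq_zero {y : EuclideanSpace ℝ (Fin N)} {p : ℕ} (hp : N ≤ p) : ext0 N y p = 0 := by
  simp [ext0, Nat.not_lt.2 hp]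

lemma mulVec_ext0 (A : Mat) (y : EuclideanSpace ℝ (Fin N)) (p : ℕ) :
    mulVec A (ext0 N y) p = ∑ j : Fin N, A p ↑j * y j := by
  rw [mulVec, tsum_eq_fin_sum (fun q hq => by rw [ext0_eq_zero hq, mul_zero])]
  refine Finset.sum_congr rfl fun j _ => ?_
  rw [ext0]
  simp [j.isLt]

lemma tsum_sq_ext0 (y : EuclideanSpace ℝ (Fin N)) :
    ∑' p, (ext0 N y p) ^ 2 = ‖y‖ ^ 2 := by
  rw [tsum_eq_fin_sum (fun p hp => by rw [ext0_eq_zero hp]; ring)]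
  rw [EuclideanSpace.norm_eq, Real.sq_sqrt (by positivity)]
  refine Finset.sum_congr rfl fun i _ => ?_
  rw [ext0]
  simp [i.isLt, sq_abs]

lemma l2norm_ext0 (y : EuclideanSpace ℝ (Fin N)) : l2norm (ext0 N y) = ‖y‖ := by
  rw [l2norm, tsum_sq_ext0, Real.sqrt_sq (norm_nonneg _)]

lemma inner_fin (x y : EuclideanSpace ℝ (Fin N)) : (inner ℝ x y : ℝ) = ∑ i, x i * y i := by
  simp [PiLp.inner_apply, mul_comm]

lemma norm_extV_le (x : ℕ → ℝ) (hx : Memℓ2 x) : ‖extV N x‖ ≤ l2norm x := by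
  rw [EuclideanSpace.norm_eq, l2norm]
  apply Real.sqrt_le_sqrt
  calc ∑ i : Fin N, ‖extV N x i‖ ^ 2 = ∑ i : Fin N, (fun p => x p ^ 2) ↑i := by
        refine Finset.sum_congr rfl fun i _ => ?_
        simp [sq_abs]
    _ = ∑ p ∈ Finset.range N, x p ^ 2 := Fin.sum_univ_eq_sum_range (fun p => x p ^ 2) N
    _ ≤ ∑' p, x p ^ 2 := Summable.sum_le_tsum _ (fun p _ => sq_nonneg _) hx

lemma mulVec_extendZero (C : Matrix (Fin N) (Fin N) ℝ) (x : ℕ → ℝ) :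
    mulVec (extendZero N C) x = ext0 N (clmOf C (extV N x)) := by
  funext p
  rw [mulVec, tsum_eq_fin_sum (N := N) (fun q hq => by
    have : ¬ (p < N ∧ q < N) := fun h => absurd h.2 (Nat.not_lt.2 hq)
    simp [extendZero, this])]
  by_cases hp : p < N
  · rw [ext0]
    simp only [hp, dif_pos]
    rw [clmOf_apply]
    refine Finset.sum_congr rfl fun j _ => ?_
    simp [extendZero, hp, j.isLt]
  · rw [ext0_eq_zero (Nat.not_lt.1 hp)]
    refine Finset.sum_eq_zero fun j _ => ?_
    simp [extendZero, hp]

lemma summable_abs_row_extendZero (C : Matrix (Fin N) (Fin N) ℝ) (x : ℕ → ℝ) (i : ℕ) :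
    Summable fun j => |extendZero N C i j * x j| := by
  apply summable_of_ne_finset_zero (s := Finset.range N)
  intro p hp
  have : N ≤ p := by simpa using hp
  have h2 : ¬ (i < N ∧ p < N) := fun h => absurd h.2 (Nat.not_lt.2 this)
  simp [extendZero, h2]

lemma boundedWith_extendZero (C : Matrix (Fin N) (Fin N) ℝ) {s : ℝ}
    (hs : ‖clmOf C‖ ≤ s) : BoundedWith (extendZero N C) s := by
  intro x hx
  refine ⟨summable_abs_row_extendZero C x, ?_, ?_⟩
  · rw [mulVec_extendZero]; exact memℓ2_ext0 _
  · rw [mulVec_extendZero, l2norm_ext0]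
    have hs0 : 0 ≤ s := le_trans (norm_nonneg _) hs
    calc ‖clmOf C (extV N x)‖ ≤ ‖clmOf C‖ * ‖extV N x‖ := (clmOf C).le_opNorm _
      _ ≤ s * ‖extV N x‖ := mul_le_mul_of_nonneg_right hs (norm_nonneg _)
      _ ≤ s * l2norm x := mul_le_mul_of_nonneg_left (norm_extV_le x hx) hs0

lemma extendZero_sub (A B : Matrix (Fin N) (Fin N) ℝ) :
    matSub (extendZero N A) (extendZero N B) = extendZero N (A - B) := by
  funext p q
  by_cases h : p < N ∧ q < N
  · simp [matSub, extendZero, h]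
  · simp [matSub, extendZero, h]

end Finite


section NormLower

variable {E : Type*} [NormedAddCommGroup E] [InnerProductSpace ℝ E]

lemma norm_lower (T : E →L[ℝ] E) (c : ℝ) (x : E) (hx : x ≠ 0)
    (h : c * ‖x‖ ^ 2 ≤ inner ℝ (T x) x) : c ≤ ‖T‖ := by
  have hx0 : 0 < ‖x‖ := norm_pos_iff.2 hx
  have h1 : (inner ℝ (T x) x : ℝ) ≤ ‖T‖ * ‖x‖ ^ 2 := by
    calc (inner ℝ (T x) x : ℝ) ≤ ‖T x‖ * ‖x‖ := real_inner_le_norm _ _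
      _ ≤ (‖T‖ * ‖x‖) * ‖x‖ := mul_le_mul_of_nonneg_right (T.le_opNorm x) (norm_nonneg _)
      _ = ‖T‖ * ‖x‖ ^ 2 := by ring
  have hx2 : 0 < ‖x‖ ^ 2 := by positivity
  nlinarith

end NormLower

section TM

variable {M : Mat} {K : ℝ}

/-- The continuous linear operator on ℓ² induced by a bounded matrix. -/
def opOf (hbw : BoundedWith M K) (hK : 0 ≤ K) : H2 →L[ℝ] H2 :=
  LinearMap.mkContinuous
    { toFun := fun f => toLp (mulVec M ⇑f) (hbw ⇑f (memℓ2_coe f)).2.1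
      map_add' := by
        intro f g
        apply Subtype.ext
        funext i
        have hf := ((hbw ⇑f (memℓ2_coe f)).1 i).of_abs
        have hg := ((hbw ⇑g (memℓ2_coe g)).1 i).of_abs
        simp only [coe_toLp, lp.coeFn_add, Pi.add_apply]
        rw [mulVec, mulVec, mulVec]
        simp only [Pi.add_apply, mul_add]
        exact Summable.tsum_add hf hg
      map_smul' := by
        intro c f
        apply Subtype.ext
        funext i
        simp only [coe_toLp, lp.coeFn_smul, Pi.smul_apply, RingHom.id_apply,
          smul_eq_mul]
        rw [mulVec, mulVec]
        simp only [Pi.smul_apply, smul_eq_mul]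
        rw [← tsum_mul_left]
        exact tsum_congr fun j => by ring }
    K
    (by
      intro f
      have h := (hbw ⇑f (memℓ2_coe f)).2.2
      simp only [LinearMap.coe_mk, AddHom.coe_mk]
      calc ‖toLp (mulVec M ⇑f) _‖ = l2norm (mulVec M ⇑f) := (l2norm_coe _).symm
        _ ≤ K * l2norm ⇑f := h
        _ = K * ‖f‖ := by rw [l2norm_coe])

lemma opOf_apply (hbw : BoundedWith M K) (hK : 0 ≤ K) (f : H2) :
    ⇑(opOf hbw hK f) = mulVec M ⇑f := rfl

lemma matOf_opOf (hbw : BoundedWith M K) (hK : 0 ≤ K) : matOf (opOf hbw hK) = M := by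
  funext i j
  have : matOf (opOf hbw hK) i j = mulVec M ⇑(e j) i := rfl
  rw [this, mulVec]
  rw [tsum_eq_single j (fun k hk => by
    rw [lp.single_apply_ne 2 j _ hk, mul_zero])]
  rw [lp.single_apply_self, mul_one]

lemma opOf_elliptic (hbw : BoundedWith M K) (hK : 0 ≤ K) {c : ℝ}
    (hell : Elliptic M c) (f : H2) :
    c * ‖f‖ ^ 2 ≤ inner ℝ (opOf hbw hK f) f := by
  rw [inner_coord, ← tsum_sq_eq]
  have := hell ⇑f (memℓ2_coe f)
  simpa [opOf_apply] using this

end TM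

section Sect

variable {M : Mat} {K : ℝ} {Cell : ℝ}

lemma sect_elliptic (hell : Elliptic M Cell) {N : ℕ} (y : EuclideanSpace ℝ (Fin N)) :
    Cell * ‖y‖ ^ 2 ≤ inner ℝ (clmOf (sect M N) y) y := by
  have h := hell (ext0 N y) (memℓ2_ext0 y)
  rw [tsum_sq_ext0] at h
  refine le_trans h ?_
  rw [inner_fin]
  rw [tsum_eq_fin_sum (N := N) (fun p hp => by rw [ext0_eq_zero hp, mul_zero])]
  apply le_of_eq
  refine Finset.sum_congr rfl fun i _ => ?_
  rw [clmOf_apply, mulVec_ext0]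
  have : ext0 N y ↑i = y i := by rw [ext0]; simp [i.isLt]
  rw [this]
  rfl

lemma sect_norm_le (hbw : BoundedWith M K) (hK : 0 ≤ K) {N : ℕ} :
    ‖clmOf (sect M N)‖ ≤ ‖opOf hbw hK‖ := by
  apply ContinuousLinearMap.opNorm_le_bound _ (norm_nonneg _)
  intro y
  set T := opOf hbw hK
  have key : ‖clmOf (sect M N) y‖ ≤ ‖T (toLp (ext0 N y) (memℓ2_ext0 y))‖ := by
    have h2 : ‖T (toLp (ext0 N y) (memℓ2_ext0 y))‖ ^ 2 = ∑' i, (mulVec M (ext0 N y) i) ^ 2 := by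
      rw [← tsum_sq_eq]
      exact tsum_congr fun i => rfl
    have h1 : ‖clmOf (sect M N) y‖ ^ 2 = ∑ i : Fin N, (mulVec M (ext0 N y) ↑i) ^ 2 := by
      rw [EuclideanSpace.norm_eq, Real.sq_sqrt (by positivity)]
      refine Finset.sum_congr rfl fun i _ => ?_
      rw [Real.norm_eq_abs, sq_abs, clmOf_apply, mulVec_ext0]
      rfl
    have hsummable : Summable fun i => (mulVec M (ext0 N y) i) ^ 2 :=
      (hbw (ext0 N y) (memℓ2_ext0 y)).2.1
    have hle : ‖clmOf (sect M N) y‖ ^ 2 ≤ ‖T (toLp (ext0 N y) (memℓ2_ext0 y))‖ ^ 2 := by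
      rw [h1, h2]
      calc ∑ i : Fin N, (mulVec M (ext0 N y) ↑i) ^ 2
          = ∑ p ∈ Finset.range N, (mulVec M (ext0 N y) p) ^ 2 :=
            Fin.sum_univ_eq_sum_range (fun p => (mulVec M (ext0 N y) p) ^ 2) N
        _ ≤ ∑' p, (mulVec M (ext0 N y) p) ^ 2 := Summable.sum_le_tsum _ (fun p _ => sq_nonneg _) hsummable
    nlinarith [norm_nonneg (clmOf (sect M N) y), norm_nonneg (T (toLp (ext0 N y) (memℓ2_ext0 y)))]
  calc ‖clmOf (sect M N) y‖ ≤ ‖T (toLp (ext0 N y) (memℓ2_ext0 y))‖ := key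
    _ ≤ ‖T‖ * ‖toLp (ext0 N y) (memℓ2_ext0 y)‖ := T.le_opNorm _
    _ = ‖T‖ * ‖y‖ := by
        rw [← l2norm_coe (toLp (ext0 N y) (memℓ2_ext0 y)), coe_toLp, l2norm_ext0]

lemma sect_isUnit (hell : Elliptic M Cell) (hCell : 0 < Cell) {N : ℕ} :
    IsUnit (sect M N) := by
  rw [Matrix.isUnit_iff_isUnit_det, isUnit_iff_ne_zero]
  intro hdet
  obtain ⟨v, hv0, hv⟩ := Matrix.exists_mulVec_eq_zero_iff.2 hdet
  have hv' : clmOf (sect M N) ((WithLp.equiv 2 _).symm v) = 0 := by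
    apply (WithLp.equiv 2 (Fin N → ℝ)).injective
    funext i
    have h1 : (clmOf (sect M N) ((WithLp.equiv 2 _).symm v)) i = ((sect M N).mulVec v) i := rfl
    show (clmOf (sect M N) ((WithLp.equiv 2 _).symm v)) i = _
    rw [h1, hv]
    rfl
  have hell' := sect_elliptic hell ((WithLp.equiv 2 _).symm v)
  rw [hv'] at hell'
  simp only [inner_zero_left] at hell'
  have hvnorm : (0:ℝ) < ‖(WithLp.equiv 2 (Fin N → ℝ)).symm v‖ := by
    rw [norm_pos_iff]
    intro h
    apply hv0
    exact (WithLp.equiv 2 _).symm.injective (by simpa using h)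
  have h2 : (0:ℝ) < ‖(WithLp.equiv 2 (Fin N → ℝ)).symm v‖ ^ 2 := by positivity
  nlinarith

end Sect


section Patterns

variable (ρ : ℕ → ℕ → ℝ)

def BandedG (b : ℝ) (A : Mat) : Prop := ∀ p q, b < ρ p q → A p q = 0

variable {ρ}

lemma bandedG_mono {b b' : ℝ} (h : b ≤ b') {A : Mat} (hA : BandedG ρ b A) :
    BandedG ρ b' A := fun p q hpq => hA p q (lt_of_le_of_lt h hpq)

lemma bandedG_matOf_one (hρ : ∀ p, ρ p p ≤ 0) {b : ℝ} (hb : 0 ≤ b) :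
    BandedG ρ b (matOf 1) := by
  intro p q hpq
  rw [matOf_one]
  rcases eq_or_ne p q with h | h
  · subst h; exact absurd hpq (not_lt.2 (le_trans (hρ p) hb))
  · rw [if_neg h]

lemma bandedG_matOf_mul (htri : ∀ p q r, ρ p q ≤ ρ p r + ρ r q) {a c : ℝ}
    {T S : H2 →L[ℝ] H2} (hT : BandedG ρ a (matOf T)) (hS : BandedG ρ c (matOf S)) :
    BandedG ρ (a + c) (matOf (T * S)) := by
  intro p q hpq
  rw [matOf_mul_entry]
  have hterm : ∀ k, matOf T p k * matOf S k q = 0 := by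
    intro k
    have : a < ρ p k ∨ c < ρ k q := by
      by_contra h
      push_neg at h
      have := htri p q k
      linarith [h.1, h.2]
    rcases this with h | h
    · rw [hT p k h, zero_mul]
    · rw [hS k q h, mul_zero]
  calc ∑' k, matOf T p k * matOf S k q = ∑' k, (0:ℝ) := tsum_congr hterm
    _ = 0 := tsum_zero

lemma bandedG_matOf_pow (hρ : ∀ p, ρ p p ≤ 0) (htri : ∀ p q r, ρ p q ≤ ρ p r + ρ r q)
    {b : ℝ} (hb : 0 ≤ b) {T : H2 →L[ℝ] H2} (hT : BandedG ρ b (matOf T)) :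
    ∀ n : ℕ, BandedG ρ (n * b) (matOf (T ^ n)) := by
  intro n
  induction n with
  | zero => simpa using bandedG_matOf_one hρ (le_refl 0)
  | succ n ih =>
      have h2 := bandedG_matOf_mul htri ih hT
      rw [← pow_succ] at h2
      have harith : ((n:ℝ) * b + b) = ((n+1 : ℕ) : ℝ) * b := by push_cast; ring
      rwa [harith] at h2

lemma bandedG_matOf_smul {b : ℝ} {c : ℝ} {T : H2 →L[ℝ] H2}
    (hT : BandedG ρ b (matOf T)) : BandedG ρ b (matOf (c • T)) := by
  intro p q hpq
  rw [matOf_smul, hT p q hpq, mul_zero]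

lemma bandedG_matOf_sum {b : ℝ} {s : Finset ℕ} {T : ℕ → (H2 →L[ℝ] H2)}
    (hT : ∀ n ∈ s, BandedG ρ b (matOf (T n))) :
    BandedG ρ b (matOf (∑ n ∈ s, T n)) := by
  intro p q hpq
  rw [matOf_sum]
  exact Finset.sum_eq_zero fun n hn => hT n hn p q hpq

variable (ρ) in
def BandedGF {N : ℕ} (b : ℝ) (C : Matrix (Fin N) (Fin N) ℝ) : Prop :=
  ∀ p q : Fin N, b < ρ ↑p ↑q → C p q = 0

lemma bandedGF_one {N : ℕ} (hρ : ∀ p, ρ p p ≤ 0) {b : ℝ} (hb : 0 ≤ b) :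
    BandedGF ρ b (1 : Matrix (Fin N) (Fin N) ℝ) := by
  intro p q hpq
  rcases eq_or_ne p q with h | h
  · subst h; exact absurd hpq (not_lt.2 (le_trans (hρ p) hb))
  · exact Matrix.one_apply_ne h

lemma bandedGF_mul (htri : ∀ p q r, ρ p q ≤ ρ p r + ρ r q) {N : ℕ} {a c : ℝ}
    {C D : Matrix (Fin N) (Fin N) ℝ} (hC : BandedGF ρ a C) (hD : BandedGF ρ c D) :
    BandedGF ρ (a + c) (C * D) := by
  intro p q hpq
  rw [Matrix.mul_apply]
  refine Finset.sum_eq_zero fun k _ => ?_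
  have : a < ρ ↑p ↑k ∨ c < ρ ↑k ↑q := by
    by_contra h
    push_neg at h
    have := htri ↑p ↑q ↑k
    linarith [h.1, h.2]
  rcases this with h | h
  · rw [hC p k h, zero_mul]
  · rw [hD k q h, mul_zero]

lemma bandedGF_pow (hρ : ∀ p, ρ p p ≤ 0) (htri : ∀ p q r, ρ p q ≤ ρ p r + ρ r q)
    {N : ℕ} {b : ℝ} (hb : 0 ≤ b) {C : Matrix (Fin N) (Fin N) ℝ}
    (hC : BandedGF ρ b C) : ∀ n : ℕ, BandedGF ρ (n * b) (C ^ n) := by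
  intro n
  induction n with
  | zero => simpa using bandedGF_one hρ (le_refl 0)
  | succ n ih =>
      have h2 := bandedGF_mul htri ih hC
      rw [← pow_succ] at h2
      have harith : ((n:ℝ) * b + b) = ((n+1 : ℕ) : ℝ) * b := by push_cast; ring
      rwa [harith] at h2

lemma bandedGF_smul {N : ℕ} {b : ℝ} {c : ℝ} {C : Matrix (Fin N) (Fin N) ℝ}
    (hC : BandedGF ρ b C) : BandedGF ρ b (c • C) := by
  intro p q hpq
  rw [Matrix.smul_apply, hC p q hpq, smul_zero]

lemma bandedGF_sub {N : ℕ} {b : ℝ} {C D : Matrix (Fin N) (Fin N) ℝ}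
    (hC : BandedGF ρ b C) (hD : BandedGF ρ b D) : BandedGF ρ b (C - D) := by
  intro p q hpq
  rw [Matrix.sub_apply, hC p q hpq, hD p q hpq, sub_zero]

lemma bandedGF_sum {N : ℕ} {b : ℝ} {s : Finset ℕ} {C : ℕ → Matrix (Fin N) (Fin N) ℝ}
    (hC : ∀ n ∈ s, BandedGF ρ b (C n)) : BandedGF ρ b (∑ n ∈ s, C n) := by
  intro p q hpq
  rw [Matrix.sum_apply]
  exact Finset.sum_eq_zero fun n hn => hC n hn p q hpq

lemma bandedGF_mono {N : ℕ} {b b' : ℝ} (h : b ≤ b') {C : Matrix (Fin N) (Fin N) ℝ}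
    (hC : BandedGF ρ b C) : BandedGF ρ b' C :=
  fun p q hpq => hC p q (lt_of_le_of_lt h hpq)

lemma bandedGF_sect {N : ℕ} {b : ℝ} {A : Mat} (hA : BandedG ρ b A) :
    BandedGF ρ b (sect A N) := fun p q hpq => hA ↑p ↑q hpq

lemma bandedG_extendZero {N : ℕ} {b : ℝ} {C : Matrix (Fin N) (Fin N) ℝ}
    (hC : BandedGF ρ b C) : BandedG ρ b (extendZero N C) := by
  intro p q hpq
  by_cases h : p < N ∧ q < N
  · rw [extendZero, dif_pos h]
    exact hC ⟨p, h.1⟩ ⟨q, h.2⟩ hpq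
  · rw [extendZero, dif_neg h]

end Patterns

section Blocks

variable {nseq : ℕ → ℕ}

lemma exists_inBlock (hn : IsBlockStructure nseq) (p : ℕ) : ∃ i, InBlock nseq i p := by
  classical
  set P : ℕ → Prop := fun i => nseq i ≤ p with hP
  have h0 : P 0 := by simp [hP, hn.2]
  have hspec : P (Nat.findGreatest P p) := Nat.findGreatest_spec (Nat.zero_le p) h0
  refine ⟨Nat.findGreatest P p, hspec, ?_⟩
  by_contra hc
  push_neg at hc
  have hc' : P (Nat.findGreatest P p + 1) := hc
  have hle : Nat.findGreatest P p + 1 ≤ p := le_trans hn.1.le_apply hc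
  have := Nat.le_findGreatest hle hc'
  omega

lemma inBlock_unique (hn : IsBlockStructure nseq) {i j p : ℕ}
    (hi : InBlock nseq i p) (hj : InBlock nseq j p) : i = j := by
  by_contra h
  rcases Nat.lt_or_ge i j with hlt | hge
  · have : nseq (i + 1) ≤ nseq j := hn.1.monotone (by omega)
    have h1 := hi.2
    have h2 := hj.1
    omega
  · have hlt : j < i := by omega
    have : nseq (j + 1) ≤ nseq i := hn.1.monotone (by omega)
    have h1 := hj.2
    have h2 := hi.1
    omega

noncomputable def blk (hn : IsBlockStructure nseq) (p : ℕ) : ℕ :=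
  (exists_inBlock hn p).choose

lemma blk_spec (hn : IsBlockStructure nseq) (p : ℕ) : InBlock nseq (blk hn p) p :=
  (exists_inBlock hn p).choose_spec

lemma blk_eq (hn : IsBlockStructure nseq) {i p : ℕ} (h : InBlock nseq i p) : blk hn p = i :=
  inBlock_unique hn (blk_spec hn p) h

end Blocks

section RingInv

lemma clmOf_ringInverse {N : ℕ} (B : Matrix (Fin N) (Fin N) ℝ) (hB : IsUnit B) :
    clmOf (Ring.inverse B) = Ring.inverse (clmOf B) := by
  obtain ⟨u, rfl⟩ := hB
  let φ := (Matrix.toEuclideanCLM (𝕜 := ℝ) (n := Fin N)).toRingEquiv.toRingHom.toMonoidHom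
  have h1 : Ring.inverse ((u : Matrix (Fin N) (Fin N) ℝ)) = ↑u⁻¹ := Ring.inverse_unit u
  have h2 : Ring.inverse (clmOf (↑u : Matrix (Fin N) (Fin N) ℝ))
      = ↑(Units.map φ u)⁻¹ := Ring.inverse_unit (Units.map φ u)
  rw [h1, h2, Units.coe_map_inv]
  rfl

end RingInv


section MoreBanded

variable {ρ : ℕ → ℕ → ℝ}

lemma bandedG_matOf_sub {b : ℝ} {T S : H2 →L[ℝ] H2}
    (hT : BandedG ρ b (matOf T)) (hS : BandedG ρ b (matOf S)) :
    BandedG ρ b (matOf (T - S)) := by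
  intro p q hpq
  rw [matOf_sub, hT p q hpq, hS p q hpq, sub_zero]

lemma bandedG_neumann_op (hρ : ∀ p, ρ p p ≤ 0) (htri : ∀ p q r, ρ p q ≤ ρ p r + ρ r q)
    {β : ℝ} (hβ : 0 ≤ β) {T : H2 →L[ℝ] H2} (hT : BandedG ρ β (matOf T))
    (t : ℝ) (N : ℕ) :
    BandedG ρ (N * β) (matOf (t • ∑ n ∈ Finset.range N, ((1 : H2 →L[ℝ] H2) - t • T) ^ n)) := by
  apply bandedG_matOf_smul
  apply bandedG_matOf_sum
  intro n hn
  have hU : BandedG ρ β (matOf ((1 : H2 →L[ℝ] H2) - t • T)) :=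
    bandedG_matOf_sub (bandedG_matOf_one hρ hβ) (bandedG_matOf_smul hT)
  have := bandedG_matOf_pow hρ htri hβ hU n
  apply bandedG_mono ?_ this
  have hnN : (n : ℝ) ≤ N := by
    have := Finset.mem_range.1 hn
    exact_mod_cast this.le
  exact mul_le_mul_of_nonneg_right hnN hβ

lemma bandedGF_neumann (hρ : ∀ p, ρ p p ≤ 0) (htri : ∀ p q r, ρ p q ≤ ρ p r + ρ r q)
    {β : ℝ} (hβ : 0 ≤ β) {N' : ℕ} {B : Matrix (Fin N') (Fin N') ℝ}
    (hB : BandedGF ρ β B) (t : ℝ) (N : ℕ) :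
    BandedGF ρ (N * β) (t • ∑ n ∈ Finset.range N, ((1 : Matrix (Fin N') (Fin N') ℝ) - t • B) ^ n) := by
  apply bandedGF_smul
  apply bandedGF_sum
  intro n hn
  have hU : BandedGF ρ β ((1 : Matrix (Fin N') (Fin N') ℝ) - t • B) :=
    bandedGF_sub (bandedGF_one hρ hβ) (bandedGF_smul hB)
  have := bandedGF_pow hρ htri hβ hU n
  apply bandedGF_mono ?_ this
  have hnN : (n : ℝ) ≤ N := by
    have := Finset.mem_range.1 hn
    exact_mod_cast this.le
  exact mul_le_mul_of_nonneg_right hnN hβ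

end MoreBanded

section Ecompare

lemma Ecompare {c q q' : ℝ} (hc : 0 < c) (hq0 : 0 ≤ q) (hqq' : q ≤ q') (hq'1 : q' < 1) (N : ℕ) :
    (1 / c) * q ^ N / (1 - q) ≤ (1 / c) * q' ^ N / (1 - q') := by
  have h1 : 0 < 1 - q' := by linarith
  have h2 : 0 < 1 - q := by linarith
  have hpow : q ^ N ≤ q' ^ N := pow_le_pow_left₀ hq0 hqq' N
  have hq'0 : 0 ≤ q' := le_trans hq0 hqq'
  rw [div_le_div_iff₀ h2 h1]
  have key : q ^ N * (1 - q') ≤ q' ^ N * (1 - q) := by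
    nlinarith [mul_le_mul_of_nonneg_right hpow h1.le,
      mul_le_mul_of_nonneg_left (show 1 - q' ≤ 1 - q by linarith) (pow_nonneg hq'0 N)]
  calc (1/c) * q ^ N * (1 - q') = (1/c) * (q ^ N * (1 - q')) := by ring
    _ ≤ (1/c) * (q' ^ N * (1 - q)) := mul_le_mul_of_nonneg_left key (by positivity)
    _ = (1/c) * q' ^ N * (1 - q) := by ring

end Ecompare


section Rho

variable {nseq : ℕ → ℕ}

noncomputable def ρblk (hn : IsBlockStructure nseq) : ℕ → ℕ → ℝ :=
  fun p q => ((|(blk hn p : ℤ) - (blk hn q : ℤ)| : ℤ) : ℝ)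

lemma ρblk_self (hn : IsBlockStructure nseq) (p : ℕ) : ρblk hn p p ≤ 0 := by
  simp [ρblk]

lemma ρblk_tri (hn : IsBlockStructure nseq) (p q r : ℕ) :
    ρblk hn p q ≤ ρblk hn p r + ρblk hn r q := by
  have h := abs_sub_le ((blk hn p : ℤ)) ((blk hn r : ℤ)) ((blk hn q : ℤ))
  rw [ρblk, ρblk, ρblk]
  have h2 : ((|(blk hn p : ℤ) - (blk hn q : ℤ)| : ℤ) : ℝ)
      ≤ ((|(blk hn p : ℤ) - (blk hn r : ℤ)| + |(blk hn r : ℤ) - (blk hn q : ℤ)| : ℤ) : ℝ) := by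
    exact_mod_cast h
  simpa using h2

lemma blockBanded_iff (hn : IsBlockStructure nseq) (b : ℕ) (A : Mat) :
    BlockBanded nseq b A ↔ BandedG (ρblk hn) (b : ℝ) A := by
  constructor
  · intro h p q hpq
    refine h (blk hn p) (blk hn q) p q (blk_spec hn p) (blk_spec hn q) ?_
    rw [ρblk] at hpq
    exact_mod_cast hpq
  · intro h i j p q hip hjq hlt
    refine h p q ?_
    rw [ρblk, blk_eq hn hip, blk_eq hn hjq]
    exact_mod_cast hlt

lemma blockDiag_iff (hn : IsBlockStructure nseq) (A : Mat) :
    BlockDiag nseq A ↔ BandedG (ρblk hn) (0 : ℝ) A := by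
  constructor
  · intro h p q hpq
    refine h (blk hn p) (blk hn q) p q (blk_spec hn p) (blk_spec hn q) ?_
    rw [ρblk] at hpq
    intro heq
    rw [heq] at hpq
    simp at hpq
  · intro h i j p q hip hjq hne
    refine h p q ?_
    rw [ρblk, blk_eq hn hip, blk_eq hn hjq]
    have : (i : ℤ) ≠ (j : ℤ) := by exact_mod_cast hne
    have h2 : (0:ℤ) < |(i:ℤ) - (j:ℤ)| := abs_pos.2 (sub_ne_zero.2 this)
    exact_mod_cast h2

end Rho

end BAI

/-- banded approximation of the inverse of a banded, bounded, elliptic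
matrix and of the inverses of all its finite sections `M[k]` (blocks `0,…,k`),
with bandedness inherited w.r.t. the metric, and inheritance of block-bandedness
and block-diagonality. -/
theorem banded_approximation_of_inverse
    (d : ℕ → ℕ → ℝ) (hd : IsMetric d) (b₀ : ℕ) (M : Mat)
    (hband : Banded d (b₀ : ℝ) M) (hbdd : IsBoundedOp M)
    (Cell : ℝ) (hCell : 0 < Cell) (hell : Elliptic M Cell)
    (nseq : ℕ → ℕ) (hn : IsBlockStructure nseq) :
    ∃ Minv : Mat, IsBoundedOp Minv ∧ IsInverseOn M Minv ∧
      (∀ k : ℕ, IsUnit (sect M (nseq (k + 1)))) ∧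
      ∀ ε : ℝ, 0 < ε → ∃ b : ℕ, ∃ R : Mat, ∃ Rk : ℕ → Mat,
        Banded d (b : ℝ) R ∧ (∀ k, Banded d (b : ℝ) (Rk k)) ∧
        (∃ s t : ℝ, 0 ≤ s ∧ 0 ≤ t ∧ s + t ≤ ε ∧
          BoundedWith (matSub Minv R) s ∧
          ∀ k, BoundedWith
            (matSub (extendZero (nseq (k + 1)) (sect M (nseq (k + 1)))⁻¹) (Rk k)) t) ∧
        (BlockBanded nseq b₀ M →
          BlockBanded nseq b R ∧ ∀ k, BlockBanded nseq b (Rk k)) ∧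
        (BlockDiag nseq M →
          BlockDiag nseq R ∧ ∀ k, BlockDiag nseq (Rk k)) := by
  classical
  obtain ⟨K, hK0, hbw⟩ := hbdd
  set T := BAI.opOf hbw hK0 with hTdef
  have hmatT : BAI.matOf T = M := BAI.matOf_opOf hbw hK0
  have hellT : ∀ f : BAI.H2, Cell * ‖f‖ ^ 2 ≤ inner ℝ (T f) f :=
    fun f => BAI.opOf_elliptic hbw hK0 hell f
  have he0 : (BAI.e 0) ≠ 0 := by
    intro h
    have h1 : (BAI.e 0 : BAI.H2) 0 = (1:ℝ) := lp.single_apply_self 2 0 1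
    rw [h] at h1
    have h2 : ((0 : BAI.H2) : ℕ → ℝ) 0 = 0 := rfl
    rw [h2] at h1
    exact one_ne_zero h1.symm
  have hTlower : Cell ≤ ‖T‖ := BAI.norm_lower T Cell (BAI.e 0) he0 (hellT _)
  obtain ⟨hTu, hbound⟩ := BAI.neumann T Cell hCell hTlower hellT
  refine ⟨BAI.matOf (Ring.inverse T),
    ⟨‖Ring.inverse T‖, norm_nonneg _, BAI.boundedWith_matOf _ le_rfl⟩, ?_,
    fun k => BAI.sect_isUnit hell hCell, ?_⟩
  · -- IsInverseOn
    intro x hx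
    set f := BAI.toLp x hx with hf
    have hMx : mulVec M x = ⇑(T f) := (BAI.opOf_apply hbw hK0 f).symm
    have hIx : mulVec (BAI.matOf (Ring.inverse T)) x = ⇑(Ring.inverse T f) :=
      BAI.mulVec_matOf _ f
    refine ⟨(hbw x hx).2.1, ?_, ?_, ?_⟩
    · rw [hIx]; exact BAI.memℓ2_coe _
    · rw [hMx, BAI.mulVec_matOf (Ring.inverse T) (T f)]
      have h1 : Ring.inverse T * T = 1 := Ring.inverse_mul_cancel _ hTu
      have h2 : Ring.inverse T (T f) = f := by
        have h3 := congrArg (fun S : BAI.H2 →L[ℝ] BAI.H2 => S f) h1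
        simpa [ContinuousLinearMap.mul_apply] using h3
      rw [h2, hf, BAI.coe_toLp]
    · rw [hIx, ← BAI.opOf_apply hbw hK0 (Ring.inverse T f)]
      have h1 : T * Ring.inverse T = 1 := Ring.mul_inverse_cancel _ hTu
      have h2 : T (Ring.inverse T f) = f := by
        have h3 := congrArg (fun S : BAI.H2 →L[ℝ] BAI.H2 => S f) h1
        simpa [ContinuousLinearMap.mul_apply] using h3
      rw [show (⇑(BAI.opOf hbw hK0 (Ring.inverse T f)) : ℕ → ℝ)
        = ⇑(T (Ring.inverse T f)) from rfl, h2, hf, BAI.coe_toLp]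
  · -- the approximation
    intro ε hε
    have hK₀ : (0:ℝ) < ‖T‖ := lt_of_lt_of_le hCell hTlower
    have hcK2 : Cell ^ 2 ≤ ‖T‖ ^ 2 := pow_le_pow_left₀ hCell.le hTlower 2
    have harg0 : 0 ≤ 1 - Cell ^ 2 / ‖T‖ ^ 2 := by
      have h : Cell ^ 2 / ‖T‖ ^ 2 ≤ 1 := (div_le_one (by positivity)).2 hcK2
      linarith
    set q' : ℝ := Real.sqrt (1 - Cell ^ 2 / ‖T‖ ^ 2) with hq'
    have hq'0 : 0 ≤ q' := Real.sqrt_nonneg _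
    have hq'1 : q' < 1 := by
      have h1 : 1 - Cell ^ 2 / ‖T‖ ^ 2 < 1 := by
        have h2 : 0 < Cell ^ 2 / ‖T‖ ^ 2 := by positivity
        linarith
      calc q' < Real.sqrt 1 := Real.sqrt_lt_sqrt harg0 h1
        _ = 1 := Real.sqrt_one
    have h1q : 0 < 1 - q' := by linarith
    obtain ⟨N, hN⟩ := exists_pow_lt_of_lt_one
      (show (0:ℝ) < ε / 2 * Cell * (1 - q') by positivity) hq'1
    have hEN : 1 / Cell * q' ^ N / (1 - q') ≤ ε / 2 := by
      rw [div_le_iff₀ h1q, one_div, inv_mul_eq_div, div_le_iff₀ hCell]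
      nlinarith [hN]
    -- generic banded facts
    have hdself : ∀ p, d p p ≤ 0 := fun p => le_of_eq ((hd.2.1 p p).2 rfl)
    have hdtri : ∀ p q r, d p q ≤ d p r + d r q := fun p q r => hd.2.2.2 p r q
    have hb₀ : (0:ℝ) ≤ (b₀ : ℝ) := Nat.cast_nonneg _
    have hMband : BAI.BandedG d (b₀ : ℝ) M := hband
    have hcast : ((N * b₀ : ℕ) : ℝ) = (N:ℝ) * (b₀:ℝ) := by push_cast; ring
    -- per-section facts
    have hBu : ∀ k : ℕ, IsUnit (sect M (nseq (k+1))) := fun k => BAI.sect_isUnit hell hCell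
    have hNk : ∀ k : ℕ, 0 < nseq (k+1) := fun k => by
      have h1 := hn.1 (Nat.zero_lt_succ k)
      rw [hn.2] at h1
      exact h1
    have hTkl : ∀ k : ℕ, Cell ≤ ‖BAI.clmOf (sect M (nseq (k+1)))‖ := by
      intro k
      refine BAI.norm_lower _ Cell
        (EuclideanSpace.single (⟨0, hNk k⟩ : Fin (nseq (k+1))) (1:ℝ)) ?_
        (BAI.sect_elliptic hell _)
      intro h
      have h1 : (EuclideanSpace.single (⟨0, hNk k⟩ : Fin (nseq (k+1))) (1:ℝ))
          (⟨0, hNk k⟩ : Fin (nseq (k+1))) = 1 := by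
        simp [EuclideanSpace.single_apply]
      rw [h] at h1
      exact one_ne_zero h1.symm
    have hTku : ∀ k : ℕ, ‖BAI.clmOf (sect M (nseq (k+1)))‖ ≤ ‖T‖ := fun k =>
      BAI.sect_norm_le hbw hK0
    have hqk : ∀ k : ℕ,
        Real.sqrt (1 - Cell ^ 2 / ‖BAI.clmOf (sect M (nseq (k+1)))‖ ^ 2) ≤ q' := by
      intro k
      rw [hq']
      apply Real.sqrt_le_sqrt
      have hpos : 0 < ‖BAI.clmOf (sect M (nseq (k+1)))‖ ^ 2 := by
        have := lt_of_lt_of_le hCell (hTkl k)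
        positivity
      have h2 : ‖BAI.clmOf (sect M (nseq (k+1)))‖ ^ 2 ≤ ‖T‖ ^ 2 :=
        pow_le_pow_left₀ (norm_nonneg _) (hTku k) 2
      have h3 : Cell ^ 2 / ‖T‖ ^ 2 ≤ Cell ^ 2 / ‖BAI.clmOf (sect M (nseq (k+1)))‖ ^ 2 :=
        div_le_div_of_nonneg_left (sq_nonneg Cell) hpos h2
      linarith
    -- the finite-section approximants
    set tk : ℕ → ℝ := fun k => Cell / ‖BAI.clmOf (sect M (nseq (k+1)))‖ ^ 2 with htk
    set Pk : (k : ℕ) → Matrix (Fin (nseq (k+1))) (Fin (nseq (k+1))) ℝ := fun k =>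
      (tk k) • ∑ n ∈ Finset.range N,
        ((1 : Matrix (Fin (nseq (k+1))) (Fin (nseq (k+1))) ℝ) - (tk k) • sect M (nseq (k+1))) ^ n
      with hPk
    have hsecnorm : ∀ k : ℕ, ‖BAI.clmOf ((sect M (nseq (k+1)))⁻¹ - Pk k)‖ ≤ ε / 2 := by
      intro k
      obtain ⟨hku, hkb⟩ := BAI.neumann (BAI.clmOf (sect M (nseq (k+1)))) Cell hCell
        (hTkl k) (fun y => BAI.sect_elliptic hell y)
      have hmap : BAI.clmOf ((sect M (nseq (k+1)))⁻¹ - Pk k)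
          = Ring.inverse (BAI.clmOf (sect M (nseq (k+1)))) - (tk k) •
            ∑ n ∈ Finset.range N,
              (1 - (tk k) • BAI.clmOf (sect M (nseq (k+1)))) ^ n := by
        unfold BAI.clmOf
        rw [map_sub, Matrix.nonsing_inv_eq_ringInverse]
        have hri := BAI.clmOf_ringInverse _ (hBu k)
        unfold BAI.clmOf at hri
        rw [hri, hPk]
        congr 1
        rw [map_smul]
        congr 1
        rw [map_sum]
        refine Finset.sum_congr rfl fun n _ => ?_
        rw [map_pow, map_sub, map_one, map_smul]
      rw [hmap]
      calc ‖Ring.inverse (BAI.clmOf (sect M (nseq (k+1)))) - (tk k) •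
            ∑ n ∈ Finset.range N,
              (1 - (tk k) • BAI.clmOf (sect M (nseq (k+1)))) ^ n‖
          ≤ 1 / Cell * Real.sqrt (1 - Cell ^ 2 / ‖BAI.clmOf (sect M (nseq (k+1)))‖ ^ 2) ^ N
            / (1 - Real.sqrt (1 - Cell ^ 2 / ‖BAI.clmOf (sect M (nseq (k+1)))‖ ^ 2)) := hkb N
        _ ≤ 1 / Cell * q' ^ N / (1 - q') :=
            BAI.Ecompare hCell (Real.sqrt_nonneg _) (hqk k) hq'1 N
        _ ≤ ε / 2 := hEN
    have hTb : BAI.BandedG d (b₀ : ℝ) (BAI.matOf T) := by rw [hmatT]; exact hMband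
    refine ⟨N * b₀,
      BAI.matOf ((Cell / ‖T‖ ^ 2) • ∑ n ∈ Finset.range N, (1 - (Cell / ‖T‖ ^ 2) • T) ^ n),
      fun k => extendZero (nseq (k+1)) (Pk k), ?_, ?_, ?_, ?_, ?_⟩
    · -- Banded R
      intro i j hij
      exact BAI.bandedG_neumann_op hdself hdtri hb₀ hTb (Cell / ‖T‖ ^ 2) N i j
        (by rwa [hcast] at hij)
    · -- Banded Rk
      intro k i j hij
      exact BAI.bandedG_extendZero
        (BAI.bandedGF_neumann hdself hdtri hb₀ (BAI.bandedGF_sect hMband) (tk k) N) i j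
        (by rwa [hcast] at hij)
    · -- the norm bounds
      refine ⟨ε/2, ε/2, by positivity, by positivity, by linarith, ?_, ?_⟩
      · have heq : matSub (BAI.matOf (Ring.inverse T))
            (BAI.matOf ((Cell / ‖T‖ ^ 2) • ∑ n ∈ Finset.range N, (1 - (Cell / ‖T‖ ^ 2) • T) ^ n))
            = BAI.matOf (Ring.inverse T -
              (Cell / ‖T‖ ^ 2) • ∑ n ∈ Finset.range N, (1 - (Cell / ‖T‖ ^ 2) • T) ^ n) := by
          funext p q
          exact (BAI.matOf_sub _ _ p q).symm
        rw [heq]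
        exact BAI.boundedWith_matOf _ (le_trans (hbound N) hEN)
      · intro k
        rw [BAI.extendZero_sub]
        exact BAI.boundedWith_extendZero _ (hsecnorm k)
    · -- BlockBanded
      intro hBB
      have hMB : BAI.BandedG (BAI.ρblk hn) (b₀ : ℝ) M := (BAI.blockBanded_iff hn b₀ M).1 hBB
      have hTB : BAI.BandedG (BAI.ρblk hn) (b₀ : ℝ) (BAI.matOf T) := by rw [hmatT]; exact hMB
      constructor
      · apply (BAI.blockBanded_iff hn (N * b₀) _).2
        intro p q hpq
        exact BAI.bandedG_neumann_op (BAI.ρblk_self hn) (BAI.ρblk_tri hn) hb₀ hTB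
          (Cell / ‖T‖ ^ 2) N p q (by rwa [hcast] at hpq)
      · intro k
        apply (BAI.blockBanded_iff hn (N * b₀) _).2
        intro p q hpq
        exact BAI.bandedG_extendZero
          (BAI.bandedGF_neumann (BAI.ρblk_self hn) (BAI.ρblk_tri hn) hb₀
            (BAI.bandedGF_sect hMB) (tk k) N) p q (by rwa [hcast] at hpq)
    · -- BlockDiag
      intro hBD
      have hMB : BAI.BandedG (BAI.ρblk hn) (0 : ℝ) M := (BAI.blockDiag_iff hn M).1 hBD
      have hTB : BAI.BandedG (BAI.ρblk hn) (0 : ℝ) (BAI.matOf T) := by rw [hmatT]; exact hMB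
      constructor
      · apply (BAI.blockDiag_iff hn _).2
        intro p q hpq
        have h := BAI.bandedG_neumann_op (BAI.ρblk_self hn) (BAI.ρblk_tri hn) le_rfl hTB
          (Cell / ‖T‖ ^ 2) N
        rw [mul_zero] at h
        exact h p q hpq
      · intro k
        apply (BAI.blockDiag_iff hn _).2
        intro p q hpq
        have h := BAI.bandedG_extendZero (N := nseq (k+1))
          (BAI.bandedGF_neumann (N' := nseq (k+1)) (BAI.ρblk_self hn) (BAI.ρblk_tri hn) le_rfl
            (BAI.bandedGF_sect (N := nseq (k+1)) hMB) (tk k) N)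
        rw [mul_zero] at h
        exact h p q hpq
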